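/- Let X = R² with the norm whose unit ball is the hexagon with vertices ±(1,1), ±(1/2,2), ±(−1,1). Then the numerical index of X satisfies n(X) ≥ 5/17. -/

import Mathlib

open Metric Set

/-- The numerical radius of a bounded linear operator. -/
noncomputable def nrad {X : Type*} [NormedAddCommGroup X] [NormedSpace ℝ X]
    (T : X →L[ℝ] X) : ℝ :=
  sSup {r : ℝ | ∃ x : X, ∃ f : X →L[ℝ] ℝ, ‖x‖ = 1 ∧ ‖f‖ = 1 ∧ f x = 1 ∧ r = |f (T x)|}

/-- The numerical index of a normed space. -/
noncomputable def nindex (X : Type*) [NormedAddCommGroup X] [NormedSpace ℝ X] : ℝ :=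
  sInf {r : ℝ | ∃ T : X →L[ℝ] X, ‖T‖ = 1 ∧ r = nrad T}

/-- Vertices of the hexagon ±(1,1), ±(1/2,2), ±(−1,1). -/
def hexVerts : Set (Fin 2 → ℝ) :=
  {![1, 1], ![1/2, 2], ![-1, 1], ![-1, -1], ![-(1/2), -2], ![1, -1]}

private lemma mem_hull3 {E : Type*} [AddCommGroup E] [Module ℝ E] {s : Set E} {a b c : E}
    (ha : a ∈ s) (hb : b ∈ s) (hc : c ∈ s) {l1 l2 l3 : ℝ} (h1 : 0 ≤ l1) (h2 : 0 ≤ l2)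
    (h3 : 0 ≤ l3) (hsum : l1 + l2 + l3 = 1) :
    l1 • a + l2 • b + l3 • c ∈ convexHull ℝ s := by
  have hconv : Convex ℝ (convexHull ℝ s) := convex_convexHull ℝ s
  have ha' := subset_convexHull ℝ s ha
  have hb' := subset_convexHull ℝ s hb
  have hc' := subset_convexHull ℝ s hc
  rcases eq_or_lt_of_le (add_nonneg h2 h3) with h0 | hpos
  · have hl2 : l2 = 0 := by linarith
    have hl3 : l3 = 0 := by linarith
    have hl1 : l1 = 1 := by linarith
    simp [hl1, hl2, hl3, ha']
  · set s23 := l2 + l3 with hs23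
    have hm : (l2 / s23) • b + (l3 / s23) • c ∈ convexHull ℝ s :=
      hconv hb' hc' (div_nonneg h2 hpos.le) (div_nonneg h3 hpos.le)
        (by field_simp; exact hs23.symm)
    have key := hconv ha' hm h1 hpos.le (by linarith)
    have : l1 • a + s23 • ((l2 / s23) • b + (l3 / s23) • c)
        = l1 • a + l2 • b + l3 • c := by
      rw [smul_add, smul_smul, smul_smul, mul_div_cancel₀ _ hpos.ne',
        mul_div_cancel₀ _ hpos.ne', ← add_assoc]
    rwa [this] at key

private lemma hex_mem (u : Fin 2 → ℝ) (h1 : |u 0| ≤ 1) (h2 : |2 * u 0 + u 1| ≤ 3)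
    (h3 : |(-2) * u 0 + 3 * u 1| ≤ 5) : u ∈ convexHull ℝ hexVerts := by
  rw [abs_le] at h1 h2 h3
  have m1 : (![1, 1] : Fin 2 → ℝ) ∈ hexVerts := by simp [hexVerts]
  have m2 : (![1/2, 2] : Fin 2 → ℝ) ∈ hexVerts := by simp [hexVerts]
  have m3 : (![-1, 1] : Fin 2 → ℝ) ∈ hexVerts := by simp [hexVerts]
  have m4 : (![-1, -1] : Fin 2 → ℝ) ∈ hexVerts := by simp [hexVerts]
  have m5 : (![-(1/2), -2] : Fin 2 → ℝ) ∈ hexVerts := by simp [hexVerts]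
  have m6 : (![1, -1] : Fin 2 → ℝ) ∈ hexVerts := by simp [hexVerts]
  set p := u 0 with hp
  set q := u 1 with hq
  rcases le_or_gt 1 q with hc1 | hc1
  · have hu : u = ((2*p - 3*q + 5)/4) • ![1, 1] + (q - 1) • ![1/2, 2]
        + ((3 - 2*p - q)/4) • ![-1, 1] := by
      funext i; fin_cases i <;>
        simp [Matrix.cons_val_zero, Matrix.cons_val_one, Matrix.head_cons, ← hp, ← hq] <;> ring
    rw [hu]
    exact mem_hull3 m1 m2 m3 (by linarith [h3.2]) (by linarith) (by linarith [h2.2]) (by ring)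
  rcases le_or_gt p q with hc2 | hc2
  · have hu : u = ((1 + p)/2) • ![1, 1] + ((q - p)/2) • ![-1, 1]
        + ((1 - q)/2) • ![-1, -1] := by
      funext i; fin_cases i <;>
        simp [Matrix.cons_val_zero, Matrix.cons_val_one, Matrix.head_cons, ← hp, ← hq] <;> ring
    rw [hu]
    exact mem_hull3 m1 m3 m4 (by linarith [h1.1]) (by linarith) (by linarith) (by ring)
  rcases le_or_gt (2*p - 1) q with hc3 | hc3
  · have hu : u = ((3 + 2*p + q)/6) • ![1, 1] + ((1 - 2*p + q)/2) • ![-1, -1]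
        + (2*(p - q)/3) • ![-(1/2), -2] := by
      funext i; fin_cases i <;>
        simp [Matrix.cons_val_zero, Matrix.cons_val_one, Matrix.head_cons, ← hp, ← hq] <;> ring
    rw [hu]
    exact mem_hull3 m1 m4 m5 (by linarith [h2.1]) (by linarith) (by linarith) (by ring)
  · have hu : u = ((3*q + 5 - 2*p)/6) • ![1, 1] + (2*(1 - p)/3) • ![-(1/2), -2]
        + ((2*p - q - 1)/2) • ![1, -1] := by
      funext i; fin_cases i <;>
        simp [Matrix.cons_val_zero, Matrix.cons_val_one, Matrix.head_cons, ← hp, ← hq] <;> ring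
    rw [hu]
    exact mem_hull3 m1 m5 m6 (by linarith [h3.1]) (by linarith [h1.2]) (by linarith) (by ring)

private def gl (α β : ℝ) : (Fin 2 → ℝ) →ₗ[ℝ] ℝ where
  toFun u := α * u 0 + β * u 1
  map_add' u v := by simp; ring
  map_smul' c u := by simp; ring

private lemma gl_apply (α β : ℝ) (u : Fin 2 → ℝ) : gl α β u = α * u 0 + β * u 1 := rfl

private lemma hull_bound (L : (Fin 2 → ℝ) →ₗ[ℝ] ℝ) (C : ℝ)
    (h : ∀ v ∈ hexVerts, |L v| ≤ C) :
    ∀ u ∈ convexHull ℝ hexVerts, |L u| ≤ C := by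
  intro u hu
  have hset : {z : Fin 2 → ℝ | |L z| ≤ C} = L ⁻¹' (Icc (-C) C) := by
    ext z; simp [abs_le]
  have hconv : Convex ℝ {z : Fin 2 → ℝ | |L z| ≤ C} := by
    rw [hset]; exact (convex_Icc (-C) C).linear_preimage L
  exact convexHull_min h hconv hu

section main
variable {X : Type*} [NormedAddCommGroup X] [NormedSpace ℝ X]

/-- the functional on X induced by (α, β). -/
private noncomputable def F [FiniteDimensional ℝ X] (e : X ≃ₗ[ℝ] (Fin 2 → ℝ)) (α β : ℝ) :
    X →L[ℝ] ℝ :=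
  LinearMap.toContinuousLinearMap ((gl α β).comp (e : X →ₗ[ℝ] (Fin 2 → ℝ)))

private lemma F_apply [FiniteDimensional ℝ X] (e : X ≃ₗ[ℝ] (Fin 2 → ℝ)) (α β : ℝ) (x : X) :
    F e α β x = α * e x 0 + β * e x 1 := rfl

private lemma key [FiniteDimensional ℝ X] (e : X ≃ₗ[ℝ] (Fin 2 → ℝ))
    (hball : closedBall (0 : X) 1 = e ⁻¹' (convexHull ℝ hexVerts))
    (α β : ℝ) (v : Fin 2 → ℝ) (hv : v ∈ hexVerts)
    (hb : ∀ w ∈ hexVerts, |α * w 0 + β * w 1| ≤ 1)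
    (hv1 : α * v 0 + β * v 1 = 1) :
    ‖e.symm v‖ = 1 ∧ ‖F e α β‖ = 1 ∧ F e α β (e.symm v) = 1 := by
  have hvmem : e.symm v ∈ closedBall (0 : X) 1 := by
    rw [hball]
    simp only [mem_preimage, LinearEquiv.apply_symm_apply]
    exact subset_convexHull ℝ _ hv
  have hxle : ‖e.symm v‖ ≤ 1 := mem_closedBall_zero_iff.mp hvmem
  have hb' : ∀ w ∈ hexVerts, |gl α β w| ≤ 1 := by
    intro w hw; rw [gl_apply]; exact hb w hw
  have hFle : ‖F e α β‖ ≤ 1 := by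
    apply ContinuousLinearMap.opNorm_le_bound _ zero_le_one
    intro x
    rcases eq_or_ne x 0 with rfl | hx
    · simp
    · have hxpos : 0 < ‖x‖ := norm_pos_iff.mpr hx
      have hmem : e ((‖x‖)⁻¹ • x) ∈ convexHull ℝ hexVerts := by
        rw [← mem_preimage, ← hball, mem_closedBall_zero_iff, norm_smul,
          norm_inv, norm_norm, inv_mul_cancel₀ hxpos.ne']
      have hbd := hull_bound (gl α β) 1 hb' _ hmem
      rw [map_smul, map_smul, smul_eq_mul, abs_mul, abs_inv, abs_norm] at hbd
      have : |gl α β (e x)| ≤ ‖x‖ := by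
        rw [inv_mul_le_iff₀ hxpos, mul_one] at hbd; exact hbd
      calc ‖F e α β x‖ = |gl α β (e x)| := rfl
        _ ≤ ‖x‖ := this
        _ = 1 * ‖x‖ := (one_mul _).symm
  have hF1 : F e α β (e.symm v) = 1 := by
    rw [F_apply]
    simp only [LinearEquiv.apply_symm_apply]
    exact hv1
  have hop := (F e α β).le_opNorm (e.symm v)
  rw [hF1] at hop
  rw [norm_one] at hop
  have h1 : 1 ≤ ‖F e α β‖ * ‖e.symm v‖ := hop
  have h2 : ‖F e α β‖ * ‖e.symm v‖ ≤ 1 * ‖e.symm v‖ :=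
    mul_le_mul_of_nonneg_right hFle (norm_nonneg _)
  have h3 : ‖F e α β‖ * ‖e.symm v‖ ≤ ‖F e α β‖ * 1 :=
    mul_le_mul_of_nonneg_left hxle (norm_nonneg _)
  constructor
  · rw [one_mul] at h2; linarith
  constructor
  · rw [mul_one] at h3; linarith
  · exact hF1

private lemma normle (e : X ≃ₗ[ℝ] (Fin 2 → ℝ))
    (hball : closedBall (0 : X) 1 = e ⁻¹' (convexHull ℝ hexVerts))
    (y : X) (C : ℝ) (hC : 0 ≤ C) (h1 : |e y 0| ≤ C) (h2 : |2 * e y 0 + e y 1| ≤ 3 * C)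
    (h3 : |(-2) * e y 0 + 3 * e y 1| ≤ 5 * C) : ‖y‖ ≤ C := by
  rcases hC.eq_or_lt with hC0 | hCpos
  · have e0 : e y 0 = 0 := by
      have := abs_nonneg (e y 0); rw [← hC0] at h1
      have := abs_nonpos_iff.mp h1; exact this
    have e1 : e y 1 = 0 := by
      rw [← hC0] at h2; norm_num [e0] at h2
      exact h2
    have hey : e y = 0 := by
      funext i; fin_cases i
      · exact e0
      · exact e1
    have : y = 0 := by
      have := congrArg e.symm hey
      simpa using this
    simp [this, ← hC0]
  · have hmem : e (C⁻¹ • y) ∈ convexHull ℝ hexVerts := by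
      have hinv : (0:ℝ) < C⁻¹ := inv_pos.mpr hCpos
      apply hex_mem
      · rw [map_smul]
        simp only [Pi.smul_apply, smul_eq_mul]
        rw [abs_mul, abs_of_pos hinv, inv_mul_le_iff₀ hCpos, mul_one]
        exact h1
      · rw [map_smul]
        simp only [Pi.smul_apply, smul_eq_mul]
        rw [show 2 * (C⁻¹ * e y 0) + C⁻¹ * e y 1 = C⁻¹ * (2 * e y 0 + e y 1) by ring]
        rw [abs_mul, abs_of_pos hinv, inv_mul_le_iff₀ hCpos]
        linarith
      · rw [map_smul]
        simp only [Pi.smul_apply, smul_eq_mul]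
        rw [show (-2) * (C⁻¹ * e y 0) + 3 * (C⁻¹ * e y 1) = C⁻¹ * ((-2) * e y 0 + 3 * e y 1) by ring]
        rw [abs_mul, abs_of_pos hinv, inv_mul_le_iff₀ hCpos]
        linarith
    have hball' : C⁻¹ • y ∈ closedBall (0 : X) 1 := by rw [hball]; exact hmem
    have hle : ‖C⁻¹ • y‖ ≤ 1 := mem_closedBall_zero_iff.mp hball'
    rw [norm_smul, norm_inv, Real.norm_eq_abs, abs_of_pos hCpos,
      inv_mul_le_iff₀ hCpos, mul_one] at hle
    exact hle

set_option maxHeartbeats 2000000 in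
private lemma main_lemma (e : X ≃ₗ[ℝ] (Fin 2 → ℝ))
    (hball : closedBall (0 : X) 1 = e ⁻¹' (convexHull ℝ hexVerts))
    (T : X →L[ℝ] X) (hT : ‖T‖ = 1) :
    ∃ x : X, ∃ f : X →L[ℝ] ℝ, ‖x‖ = 1 ∧ ‖f‖ = 1 ∧ f x = 1 ∧ 5/17 ≤ |f (T x)| := by
  haveI : FiniteDimensional ℝ X := e.symm.finiteDimensional
  have m1 : (![1, 1] : Fin 2 → ℝ) ∈ hexVerts := by simp [hexVerts]
  have m2 : (![1/2, 2] : Fin 2 → ℝ) ∈ hexVerts := by simp [hexVerts]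
  have m3 : (![-1, 1] : Fin 2 → ℝ) ∈ hexVerts := by simp [hexVerts]
  -- bound checks for the four functionals
  have bnd1 : ∀ v ∈ hexVerts, |(1:ℝ) * v 0 + 0 * v 1| ≤ 1 := by
    intro v hv
    simp only [hexVerts, mem_insert_iff, mem_singleton_iff] at hv
    rcases hv with rfl|rfl|rfl|rfl|rfl|rfl <;>
      norm_num [Matrix.cons_val_zero, Matrix.cons_val_one, Matrix.head_cons, abs_le]
  have bnd2 : ∀ v ∈ hexVerts, |(2/3:ℝ) * v 0 + (1/3) * v 1| ≤ 1 := by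
    intro v hv
    simp only [hexVerts, mem_insert_iff, mem_singleton_iff] at hv
    rcases hv with rfl|rfl|rfl|rfl|rfl|rfl <;>
      norm_num [Matrix.cons_val_zero, Matrix.cons_val_one, Matrix.head_cons, abs_le] <;> norm_num
  have bnd3 : ∀ v ∈ hexVerts, |(-2/5:ℝ) * v 0 + (3/5) * v 1| ≤ 1 := by
    intro v hv
    simp only [hexVerts, mem_insert_iff, mem_singleton_iff] at hv
    rcases hv with rfl|rfl|rfl|rfl|rfl|rfl <;>
      norm_num [Matrix.cons_val_zero, Matrix.cons_val_one, Matrix.head_cons, abs_le] <;> norm_num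
  have bnd4 : ∀ v ∈ hexVerts, |(-1:ℝ) * v 0 + 0 * v 1| ≤ 1 := by
    intro v hv
    simp only [hexVerts, mem_insert_iff, mem_singleton_iff] at hv
    rcases hv with rfl|rfl|rfl|rfl|rfl|rfl <;>
      norm_num [Matrix.cons_val_zero, Matrix.cons_val_one, Matrix.head_cons, abs_le]
  -- the six norming pairs
  have k11 := key e hball 1 0 ![1,1] m1 bnd1 (by norm_num)
  have k21 := key e hball (2/3) (1/3) ![1,1] m1 bnd2 (by norm_num)
  have k22 := key e hball (2/3) (1/3) ![1/2,2] m2 bnd2 (by norm_num)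
  have k32 := key e hball (-2/5) (3/5) ![1/2,2] m2 bnd3 (by norm_num)
  have k33 := key e hball (-2/5) (3/5) ![-1,1] m3 bnd3 (by norm_num)
  have k43 := key e hball (-1) 0 ![-1,1] m3 bnd4 (by norm_num)
  -- images of the vertices
  set u1 := e (T (e.symm ![1,1])) with hu1def
  set u2 := e (T (e.symm ![1/2,2])) with hu2def
  set u3 := e (T (e.symm ![-1,1])) with hu3def
  -- the six numerical-radius values and their max
  set w := max |F e 1 0 (T (e.symm ![1,1]))|
      (max |F e (2/3) (1/3) (T (e.symm ![1,1]))|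
      (max |F e (2/3) (1/3) (T (e.symm ![1/2,2]))|
      (max |F e (-2/5) (3/5) (T (e.symm ![1/2,2]))|
      (max |F e (-2/5) (3/5) (T (e.symm ![-1,1]))|
           |F e (-1) 0 (T (e.symm ![-1,1]))|)))) with hwdef
  have hA1w : |F e 1 0 (T (e.symm ![1,1]))| ≤ w := by rw [hwdef]; exact le_max_left _ _
  have hA2w : |F e (2/3) (1/3) (T (e.symm ![1,1]))| ≤ w := by
    rw [hwdef]; exact le_trans (le_max_left _ _) (le_max_right _ _)
  have hA3w : |F e (2/3) (1/3) (T (e.symm ![1/2,2]))| ≤ w := by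
    rw [hwdef]
    exact le_trans (le_trans (le_max_left _ _) (le_max_right _ _)) (le_max_right _ _)
  have hA4w : |F e (-2/5) (3/5) (T (e.symm ![1/2,2]))| ≤ w := by
    rw [hwdef]
    exact le_trans (le_trans (le_trans (le_max_left _ _) (le_max_right _ _)) (le_max_right _ _))
      (le_max_right _ _)
  have hA5w : |F e (-2/5) (3/5) (T (e.symm ![-1,1]))| ≤ w := by
    rw [hwdef]
    exact le_trans (le_trans (le_trans (le_trans (le_max_left _ _) (le_max_right _ _))
      (le_max_right _ _)) (le_max_right _ _)) (le_max_right _ _)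
  have hA6w : |F e (-1) 0 (T (e.symm ![-1,1]))| ≤ w := by
    rw [hwdef]
    exact le_trans (le_trans (le_trans (le_trans (le_max_right _ _) (le_max_right _ _))
      (le_max_right _ _)) (le_max_right _ _)) (le_max_right _ _)
  have hw0 : 0 ≤ w := le_trans (abs_nonneg _) hA1w
  -- value identities
  have eA1 : F e 1 0 (T (e.symm ![1,1])) = u1 0 := by rw [F_apply, ← hu1def]; ring
  have eA2 : F e (2/3) (1/3) (T (e.symm ![1,1])) = (2 * u1 0 + u1 1) / 3 := by
    rw [F_apply, ← hu1def]; ring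
  have eA3 : F e (2/3) (1/3) (T (e.symm ![1/2,2])) = (2 * u2 0 + u2 1) / 3 := by
    rw [F_apply, ← hu2def]; ring
  have eA4 : F e (-2/5) (3/5) (T (e.symm ![1/2,2])) = ((-2) * u2 0 + 3 * u2 1) / 5 := by
    rw [F_apply, ← hu2def]; ring
  have eA5 : F e (-2/5) (3/5) (T (e.symm ![-1,1])) = ((-2) * u3 0 + 3 * u3 1) / 5 := by
    rw [F_apply, ← hu3def]; ring
  have eA6 : F e (-1) 0 (T (e.symm ![-1,1])) = -(u3 0) := by rw [F_apply, ← hu3def]; ring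
  -- bounds in coordinates
  have ha1 : |u1 0| ≤ w := by rw [← eA1]; exact hA1w
  have ha2 : |2 * u1 0 + u1 1| ≤ 3 * w := by
    rw [eA2, abs_div, show |(3:ℝ)| = 3 by norm_num] at hA2w; linarith
  have ha3 : |2 * u2 0 + u2 1| ≤ 3 * w := by
    rw [eA3, abs_div, show |(3:ℝ)| = 3 by norm_num] at hA3w; linarith
  have ha4 : |(-2) * u2 0 + 3 * u2 1| ≤ 5 * w := by
    rw [eA4, abs_div, show |(5:ℝ)| = 5 by norm_num] at hA4w; linarith
  have ha5 : |(-2) * u3 0 + 3 * u3 1| ≤ 5 * w := by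
    rw [eA5, abs_div, show |(5:ℝ)| = 5 by norm_num] at hA5w; linarith
  have ha6 : |u3 0| ≤ w := by rw [eA6, abs_neg] at hA6w; exact hA6w
  -- decomposition of u2
  have hV2 : (![1/2, 2] : Fin 2 → ℝ) = (5/4:ℝ) • ![1,1] + (3/4:ℝ) • ![-1,1] := by
    funext i; fin_cases i <;>
      norm_num [Matrix.cons_val_zero, Matrix.cons_val_one, Matrix.head_cons]
  have hu2eq : u2 = (5/4:ℝ) • u1 + (3/4:ℝ) • u3 := by
    rw [hu2def, hV2]
    simp only [map_add, map_smul]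
    rfl
  have ha7 : |u2 0| ≤ 2 * w := by
    have h20 : u2 0 = 5/4 * u1 0 + 3/4 * u3 0 := by
      rw [hu2eq]; simp [Pi.add_apply, Pi.smul_apply, smul_eq_mul]
    rw [h20]
    have habs := abs_add_le ((5/4:ℝ) * u1 0) ((3/4:ℝ) * u3 0)
    rw [abs_mul, abs_mul, show |(5/4:ℝ)| = 5/4 by norm_num,
      show |(3/4:ℝ)| = 3/4 by norm_num] at habs
    linarith
  have ha8 : |2 * u3 0 + u3 1| ≤ 13/3 * w := by
    rw [show 2 * u3 0 + u3 1 = ((-2) * u3 0 + 3 * u3 1)/3 + 8/3 * u3 0 by ring]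
    have habs := abs_add_le (((-2) * u3 0 + 3 * u3 1)/3) ((8/3:ℝ) * u3 0)
    rw [abs_div, abs_mul, show |(3:ℝ)| = 3 by norm_num,
      show |(8/3:ℝ)| = 8/3 by norm_num] at habs
    linarith
  have ha9 : |(-2) * u1 0 + 3 * u1 1| ≤ 17 * w := by
    rw [show (-2) * u1 0 + 3 * u1 1 = 3 * (2 * u1 0 + u1 1) + (-8) * u1 0 by ring]
    have habs := abs_add_le ((3:ℝ) * (2 * u1 0 + u1 1)) ((-8:ℝ) * u1 0)
    rw [abs_mul, abs_mul, show |(3:ℝ)| = 3 by norm_num,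
      show |(-8:ℝ)| = 8 by norm_num] at habs
    linarith
  -- the linear map Φ = e ∘ T ∘ e.symm
  set Φ : (Fin 2 → ℝ) →ₗ[ℝ] (Fin 2 → ℝ) :=
    (e : X →ₗ[ℝ] (Fin 2 → ℝ)).comp ((T : X →ₗ[ℝ] X).comp (e.symm : (Fin 2 → ℝ) →ₗ[ℝ] X))
    with hΦdef
  have hΦv : ∀ v : Fin 2 → ℝ, Φ v = e (T (e.symm v)) := fun v => rfl
  -- negation identities
  have hn1 : (![-1, -1] : Fin 2 → ℝ) = -![1, 1] := by
    funext i; fin_cases i <;> norm_num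
  have hn2 : (![-(1/2), -2] : Fin 2 → ℝ) = -![1/2, 2] := by
    funext i; fin_cases i <;> norm_num
  have hn3 : (![1, -1] : Fin 2 → ℝ) = -![-1, 1] := by
    funext i; fin_cases i <;> norm_num
  -- vertex bounds for the three coordinate functionals of e ∘ T ∘ e.symm
  have hL1 : ∀ v ∈ hexVerts, |((gl 1 0).comp Φ) v| ≤ 17/5 * w := by
    have e1 : ∀ z : Fin 2 → ℝ, gl 1 0 z = z 0 := fun z => by rw [gl_apply]; ring
    intro v hv
    simp only [hexVerts, mem_insert_iff, mem_singleton_iff] at hv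
    rcases hv with rfl|rfl|rfl|rfl|rfl|rfl
    · rw [LinearMap.comp_apply, hΦv, ← hu1def, e1]; linarith
    · rw [LinearMap.comp_apply, hΦv, ← hu2def, e1]; linarith
    · rw [LinearMap.comp_apply, hΦv, ← hu3def, e1]; linarith
    · rw [hn1, map_neg, abs_neg, LinearMap.comp_apply, hΦv, ← hu1def, e1]; linarith
    · rw [hn2, map_neg, abs_neg, LinearMap.comp_apply, hΦv, ← hu2def, e1]; linarith
    · rw [hn3, map_neg, abs_neg, LinearMap.comp_apply, hΦv, ← hu3def, e1]; linarith
  have hL2 : ∀ v ∈ hexVerts, |((gl 2 1).comp Φ) v| ≤ 3 * (17/5 * w) := by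
    have e2 : ∀ z : Fin 2 → ℝ, gl 2 1 z = 2 * z 0 + z 1 := fun z => by rw [gl_apply]; ring
    intro v hv
    simp only [hexVerts, mem_insert_iff, mem_singleton_iff] at hv
    rcases hv with rfl|rfl|rfl|rfl|rfl|rfl
    · rw [LinearMap.comp_apply, hΦv, ← hu1def, e2]; linarith
    · rw [LinearMap.comp_apply, hΦv, ← hu2def, e2]; linarith
    · rw [LinearMap.comp_apply, hΦv, ← hu3def, e2]; linarith
    · rw [hn1, map_neg, abs_neg, LinearMap.comp_apply, hΦv, ← hu1def, e2]; linarith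
    · rw [hn2, map_neg, abs_neg, LinearMap.comp_apply, hΦv, ← hu2def, e2]; linarith
    · rw [hn3, map_neg, abs_neg, LinearMap.comp_apply, hΦv, ← hu3def, e2]; linarith
  have hL3 : ∀ v ∈ hexVerts, |((gl (-2) 3).comp Φ) v| ≤ 5 * (17/5 * w) := by
    have e3 : ∀ z : Fin 2 → ℝ, gl (-2) 3 z = (-2) * z 0 + 3 * z 1 := fun z => rfl
    intro v hv
    simp only [hexVerts, mem_insert_iff, mem_singleton_iff] at hv
    rcases hv with rfl|rfl|rfl|rfl|rfl|rfl
    · rw [LinearMap.comp_apply, hΦv, ← hu1def, e3]; linarith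
    · rw [LinearMap.comp_apply, hΦv, ← hu2def, e3]; linarith
    · rw [LinearMap.comp_apply, hΦv, ← hu3def, e3]; linarith
    · rw [hn1, map_neg, abs_neg, LinearMap.comp_apply, hΦv, ← hu1def, e3]; linarith
    · rw [hn2, map_neg, abs_neg, LinearMap.comp_apply, hΦv, ← hu2def, e3]; linarith
    · rw [hn3, map_neg, abs_neg, LinearMap.comp_apply, hΦv, ← hu3def, e3]; linarith
  -- core bound on the unit ball
  have hcore : ∀ x : X, ‖x‖ ≤ 1 → ‖T x‖ ≤ 17/5 * w := by
    intro x hx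
    have hm : e x ∈ convexHull ℝ hexVerts := by
      rw [← mem_preimage, ← hball]
      exact mem_closedBall_zero_iff.mpr hx
    have h1 := hull_bound _ _ hL1 (e x) hm
    have h2 := hull_bound _ _ hL2 (e x) hm
    have h3 := hull_bound _ _ hL3 (e x) hm
    rw [LinearMap.comp_apply, hΦv, e.symm_apply_apply, gl_apply,
      show (1:ℝ) * e (T x) 0 + 0 * e (T x) 1 = e (T x) 0 by ring] at h1
    rw [LinearMap.comp_apply, hΦv, e.symm_apply_apply, gl_apply,
      show (2:ℝ) * e (T x) 0 + 1 * e (T x) 1 = 2 * e (T x) 0 + e (T x) 1 by ring] at h2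
    rw [LinearMap.comp_apply, hΦv, e.symm_apply_apply, gl_apply] at h3
    exact normle e hball (T x) (17/5 * w) (by linarith) h1 h2 h3
  -- operator norm bound
  have hTle : ‖T‖ ≤ 17/5 * w := by
    apply ContinuousLinearMap.opNorm_le_bound _ (by linarith)
    intro x
    rcases eq_or_ne x 0 with rfl | hx
    · simp
    · have hxpos : 0 < ‖x‖ := norm_pos_iff.mpr hx
      have hy : ‖(‖x‖)⁻¹ • x‖ ≤ 1 := by
        rw [norm_smul, norm_inv, norm_norm, inv_mul_cancel₀ hxpos.ne']
      have h := hcore _ hy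
      rw [map_smul, norm_smul, norm_inv, norm_norm] at h
      have h2 : ‖x‖ * ((‖x‖)⁻¹ * ‖T x‖) ≤ ‖x‖ * (17/5 * w) :=
        mul_le_mul_of_nonneg_left h (norm_nonneg x)
      rw [← mul_assoc, mul_inv_cancel₀ hxpos.ne', one_mul] at h2
      linarith
  have hw517 : 5/17 ≤ w := by rw [hT] at hTle; linarith
  -- pick an attaining pair
  rw [hwdef] at hw517
  rcases le_max_iff.mp hw517 with h | h
  · exact ⟨e.symm ![1,1], F e 1 0, k11.1, k11.2.1, k11.2.2, h⟩
  rcases le_max_iff.mp h with h | h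
  · exact ⟨e.symm ![1,1], F e (2/3) (1/3), k21.1, k21.2.1, k21.2.2, h⟩
  rcases le_max_iff.mp h with h | h
  · exact ⟨e.symm ![1/2,2], F e (2/3) (1/3), k22.1, k22.2.1, k22.2.2, h⟩
  rcases le_max_iff.mp h with h | h
  · exact ⟨e.symm ![1/2,2], F e (-2/5) (3/5), k32.1, k32.2.1, k32.2.2, h⟩
  rcases le_max_iff.mp h with h | h
  · exact ⟨e.symm ![-1,1], F e (-2/5) (3/5), k33.1, k33.2.1, k33.2.2, h⟩
  · exact ⟨e.symm ![-1,1], F e (-1) 0, k43.1, k43.2.1, k43.2.2, h⟩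

end main

theorem stmt_5 {X : Type*} [NormedAddCommGroup X] [NormedSpace ℝ X]
    (e : X ≃ₗ[ℝ] (Fin 2 → ℝ))
    (hball : closedBall (0 : X) 1 = e ⁻¹' (convexHull ℝ hexVerts)) :
    nindex X ≥ 5 / 17 := by
  haveI : Nontrivial X := by
    refine ⟨e.symm ![1, 0], 0, fun h => ?_⟩
    have h0 : (![1, 0] : Fin 2 → ℝ) = 0 := by
      have := congrArg e h
      simpa using this
    have := congrFun h0 0
    norm_num at this
  rw [ge_iff_le, nindex]
  apply le_csInf
  · exact ⟨nrad (ContinuousLinearMap.id ℝ X), ContinuousLinearMap.id ℝ X,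
      ContinuousLinearMap.norm_id, rfl⟩
  rintro b ⟨T, hT, rfl⟩
  obtain ⟨x, f, hx, hf, hfx, hge⟩ := main_lemma e hball T hT
  have hbdd : BddAbove {r : ℝ | ∃ x : X, ∃ f : X →L[ℝ] ℝ,
      ‖x‖ = 1 ∧ ‖f‖ = 1 ∧ f x = 1 ∧ r = |f (T x)|} := by
    refine ⟨1, ?_⟩
    rintro r ⟨y, g, hy, hg, hgy, rfl⟩
    have h1 : |g (T y)| ≤ ‖g‖ * ‖T y‖ := by
      have := g.le_opNorm (T y)
      rwa [Real.norm_eq_abs] at this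
    have h2 : ‖T y‖ ≤ ‖T‖ * ‖y‖ := T.le_opNorm y
    rw [hg, one_mul] at h1
    rw [hT, hy, one_mul] at h2
    linarith
  have hmem : |f (T x)| ∈ {r : ℝ | ∃ x : X, ∃ f : X →L[ℝ] ℝ,
      ‖x‖ = 1 ∧ ‖f‖ = 1 ∧ f x = 1 ∧ r = |f (T x)|} := ⟨x, f, hx, hf, hfx, rfl⟩
  calc (5:ℝ)/17 ≤ |f (T x)| := hge
    _ ≤ nrad T := le_csSup hbdd hmem
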